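/- Let Y' → Y be a morphism of schemes over F_p. If the relative Frobenius morphism of Y' over Y is an isomorphism (i.e. Y' is relatively perfect over Y) and Y' → Y is of finite presentation and flat, then Y' → Y is étale in each residue characteristic-p fiber; in particular, if Y' → Y is smooth and relatively perfect then Ω^1_{Y'/Y} = 0. -/

import Mathlib

open CategoryTheory

private lemma charP_of_p_eq_zero (p : ℕ) [Fact p.Prime] (B : Type) [CommRing B]
    [Nontrivial B] (hp : (p : B) = 0) : CharP B p := by
  have h1 := ringChar.dvd (R := B) hp
  rcases (Fact.out : p.Prime).eq_one_or_self_of_dvd _ h1 with h | h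
  · exact absurd h CharP.ringChar_ne_one
  · exact h ▸ ringChar.charP B

private lemma pow_p_congr (p : ℕ) [Fact p.Prime] {B : Type} [CommRing B]
    {I : Ideal B} (hI : I ^ 2 = ⊥) (hp : (p : B) = 0) {x y : B}
    (h : Ideal.Quotient.mk I x = Ideal.Quotient.mk I y) : x ^ p = y ^ p := by
  have hxy : x - y ∈ I := Ideal.Quotient.eq.mp h
  have hsum : (∑ i ∈ Finset.range p, x ^ i * y ^ (p - 1 - i)) ∈ I := by
    rw [← Ideal.Quotient.eq_zero_iff_mem, map_sum]
    have : ∀ i ∈ Finset.range p,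
        Ideal.Quotient.mk I (x ^ i * y ^ (p - 1 - i)) = (Ideal.Quotient.mk I y) ^ (p - 1) := by
      intro i hi
      have hi := Finset.mem_range.mp hi
      rw [map_mul, map_pow, map_pow, h, ← pow_add]
      congr 1
      omega
    rw [Finset.sum_congr rfl this, Finset.sum_const, Finset.card_range, nsmul_eq_mul,
      ← map_natCast (Ideal.Quotient.mk I), hp, map_zero, zero_mul]
  have : x ^ p - y ^ p ∈ (⊥ : Ideal B) := by
    rw [← hI, ← geom_sum₂_mul x y p, pow_two]
    exact Ideal.mul_mem_mul hsum hxy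
  rw [Ideal.mem_bot, sub_eq_zero] at this
  exact this

/-- A ring map `R → S` in characteristic `p` is *relatively perfect* if the square
formed by the absolute Frobenius endomorphisms of `R` and `S` and the structure map
is cocartesian in the category of commutative rings (this corresponds to the
cartesianness of the Frobenius square of schemes, i.e. the relative Frobenius
`Y' → Y'^{(p)}` being an isomorphism). -/
def RelativelyPerfect (R S : Type) [CommRing R] [CommRing S] [Algebra R S]
    (p : ℕ) [Fact p.Prime] [CharP R p] [CharP S p] : Prop :=
  IsPushout
    (CommRingCat.ofHom (frobenius R p))
    (CommRingCat.ofHom (algebraMap R S))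
    (CommRingCat.ofHom (algebraMap R S))
    (CommRingCat.ofHom (frobenius S p))

private lemma formallyEtale_of_relPerfect (p : ℕ) [Fact p.Prime] (R S : Type) [CommRing R]
    [CommRing S] [Algebra R S] [CharP R p] [CharP S p]
    (hrp : RelativelyPerfect R S p) : Algebra.FormallyEtale R S := by
  rw [Algebra.FormallyEtale.iff_comp_bijective]
  intro B _ _ I hI
  have hpB : (p : B) = 0 := by
    rw [← map_natCast (algebraMap R B) p, CharP.cast_eq_zero, map_zero]
  constructor
  · -- injectivity
    intro g₁ g₂ hg
    have hpw : ∀ s : S, g₁ (s ^ p) = g₂ (s ^ p) := by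
      intro s
      rw [map_pow, map_pow]
      exact pow_p_congr p hI hpB (by simpa [Ideal.Quotient.mkₐ_eq_mk] using AlgHom.congr_fun hg s)
    have h1 : CommRingCat.ofHom (algebraMap R S) ≫ CommRingCat.ofHom g₁.toRingHom =
        CommRingCat.ofHom (algebraMap R S) ≫ CommRingCat.ofHom g₂.toRingHom := by
      ext r
      show g₁.toRingHom (algebraMap R S r) = g₂.toRingHom (algebraMap R S r)
      simp
    have h2 : CommRingCat.ofHom (frobenius S p) ≫ CommRingCat.ofHom g₁.toRingHom =
        CommRingCat.ofHom (frobenius S p) ≫ CommRingCat.ofHom g₂.toRingHom := by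
      ext s
      show g₁.toRingHom (frobenius S p s) = g₂.toRingHom (frobenius S p s)
      simpa [frobenius_def] using hpw s
    have := hrp.hom_ext h1 h2
    ext s
    exact DFunLike.congr_fun (congrArg CommRingCat.Hom.hom this) s
  · -- surjectivity
    intro f
    by_cases hB : Subsingleton B
    · have hBI : Subsingleton (B ⧸ I) := Ideal.Quotient.mk_surjective.subsingleton
      refine ⟨{ toFun := fun _ => 0,
                map_one' := Subsingleton.elim _ _,
                map_mul' := fun _ _ => Subsingleton.elim _ _,
                map_zero' := rfl,
                map_add' := fun _ _ => Subsingleton.elim _ _,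
                commutes' := fun _ => Subsingleton.elim _ _ }, ?_⟩
      ext s
      exact Subsingleton.elim _ _
    · have : Nontrivial B := not_subsingleton_iff_nontrivial.mp hB
      have : CharP B p := charP_of_p_eq_zero p B hpB
      have : ExpChar B p := ExpChar.prime Fact.out
      set σ : B ⧸ I → B := Function.surjInv Ideal.Quotient.mk_surjective with hσ
      have key : ∀ u : B ⧸ I, Ideal.Quotient.mk I (σ u) = u := fun u =>
        Function.surjInv_eq _ u
      set φ : S →+* B :=
        { toFun := fun s => σ (f s) ^ p,
          map_one' := by
            show σ (f 1) ^ p = 1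
            have h : Ideal.Quotient.mk I (σ (f 1)) = Ideal.Quotient.mk I (1 : B) := by
              rw [key, map_one, map_one]
            rw [pow_p_congr p hI hpB h, one_pow],
          map_mul' := fun x y => by
            show σ (f (x * y)) ^ p = σ (f x) ^ p * σ (f y) ^ p
            have h : Ideal.Quotient.mk I (σ (f (x * y))) =
                Ideal.Quotient.mk I (σ (f x) * σ (f y)) := by
              rw [key, map_mul, map_mul, key, key]
            rw [pow_p_congr p hI hpB h, mul_pow],
          map_zero' := by
            show σ (f 0) ^ p = 0
            have h : Ideal.Quotient.mk I (σ (f 0)) = Ideal.Quotient.mk I (0 : B) := by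
              rw [key, map_zero, map_zero]
            rw [pow_p_congr p hI hpB h, zero_pow (Fact.out : p.Prime).ne_zero],
          map_add' := fun x y => by
            show σ (f (x + y)) ^ p = σ (f x) ^ p + σ (f y) ^ p
            have h : Ideal.Quotient.mk I (σ (f (x + y))) =
                Ideal.Quotient.mk I (σ (f x) + σ (f y)) := by
              rw [key, map_add, map_add, key, key]
            rw [pow_p_congr p hI hpB h, add_pow_char] } with hφ
      have hφs : ∀ s : S, φ s = σ (f s) ^ p := fun _ => rfl
      have w : CommRingCat.ofHom (frobenius R p) ≫ CommRingCat.ofHom (algebraMap R B) =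
          CommRingCat.ofHom (algebraMap R S) ≫ CommRingCat.ofHom φ := by
        ext r
        have h : Ideal.Quotient.mk I (σ (f (algebraMap R S r))) =
            Ideal.Quotient.mk I (algebraMap R B r) := by
          rw [key, f.commutes]
          rw [IsScalarTower.algebraMap_apply R B (B ⧸ I), Ideal.Quotient.algebraMap_eq]
        show algebraMap R B (frobenius R p r) = φ (algebraMap R S r)
        rw [hφs, frobenius_def, map_pow, pow_p_congr p hI hpB h]
      set ψ := hrp.desc (CommRingCat.ofHom (algebraMap R B)) (CommRingCat.ofHom φ) w with hψ
      have hinl := hrp.inl_desc (CommRingCat.ofHom (algebraMap R B)) (CommRingCat.ofHom φ) w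
      have hinr := hrp.inr_desc (CommRingCat.ofHom (algebraMap R B)) (CommRingCat.ofHom φ) w
      refine ⟨{ toRingHom := ψ.hom,
                commutes' := fun r => ?_ }, ?_⟩
      · exact DFunLike.congr_fun (congrArg CommRingCat.Hom.hom hinl) r
      · -- show mkₐ ∘ g = f
        have h1 : CommRingCat.ofHom (algebraMap R S) ≫
              (ψ ≫ CommRingCat.ofHom (Ideal.Quotient.mk I)) =
            CommRingCat.ofHom (algebraMap R S) ≫ CommRingCat.ofHom f.toRingHom := by
          rw [← Category.assoc, hinl]
          ext r
          show Ideal.Quotient.mk I (algebraMap R B r) = f (algebraMap R S r)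
          rw [f.commutes, IsScalarTower.algebraMap_apply R B (B ⧸ I),
            Ideal.Quotient.algebraMap_eq]
        have h2 : CommRingCat.ofHom (frobenius S p) ≫
              (ψ ≫ CommRingCat.ofHom (Ideal.Quotient.mk I)) =
            CommRingCat.ofHom (frobenius S p) ≫ CommRingCat.ofHom f.toRingHom := by
          rw [← Category.assoc, hinr]
          ext s
          show Ideal.Quotient.mk I (φ s) = f (frobenius S p s)
          rw [hφs, map_pow, key, frobenius_def, map_pow]
        have := hrp.hom_ext h1 h2
        ext s
        exact DFunLike.congr_fun (congrArg CommRingCat.Hom.hom this) s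


/-- **Relatively perfect + flat + finitely presented ⇒ étale, and
smooth + relatively perfect ⇒ `Ω¹ = 0`** (affine version of the statement for
morphisms `Y' → Y` of `𝔽_p`-schemes; here all fibers have residue characteristic `p`,
so "étale in each residue characteristic-`p` fiber" means étale). -/
theorem stmt_4 (p : ℕ) [Fact p.Prime] (R S : Type) [CommRing R] [CommRing S]
    [Algebra R S] [CharP R p] [CharP S p]
    (hrp : RelativelyPerfect R S p) :
    (Algebra.FinitePresentation R S → Module.Flat R S → Algebra.Etale R S) ∧
    (Algebra.Smooth R S → Subsingleton (Ω[S⁄R])) := by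
  have hFE : Algebra.FormallyEtale R S := formallyEtale_of_relPerfect p R S hrp
  constructor
  · intro hfp _
    exact { formallyEtale := hFE, finitePresentation := hfp }
  · intro _
    haveI := hFE
    haveI : Algebra.FormallyUnramified R S := inferInstance
    exact Algebra.FormallyUnramified.subsingleton_kaehlerDifferential
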